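/- Let Φ_k : ℂ^k → ℂ^k be the map whose j-th component is Σ_{i=1}^k |w_i|^{1-j} w_i^j (with the convention that the term is 0 when w_i = 0), and let R_k = {w ∈ ℂ^k : |w₁| + ⋯ + |w_k| < 1}. Then the Brouwer degree of Φ_k relative to R_k with respect to 0 equals k!, and in particular Φ_k(w) = 0 if and only if w = 0. -/

import Mathlib

open Set

structure DegreeTheory (k : ℕ) where
  deg : ((Fin k → ℂ) → (Fin k → ℂ)) → Set (Fin k → ℂ) → (Fin k → ℂ) → ℤ
  normalization : ∀ (U : Set (Fin k → ℂ)) (y : Fin k → ℂ),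
    IsOpen U → Bornology.IsBounded U → y ∈ U → deg id U y = 1
  additivity : ∀ (f : (Fin k → ℂ) → (Fin k → ℂ)) (U U₁ U₂ : Set (Fin k → ℂ))
    (y : Fin k → ℂ), IsOpen U → Bornology.IsBounded U → IsOpen U₁ → IsOpen U₂ →
    Disjoint U₁ U₂ → U₁ ∪ U₂ ⊆ U → Continuous f →
    (∀ x ∈ closure U \ (U₁ ∪ U₂), f x ≠ y) →
    deg f U y = deg f U₁ y + deg f U₂ y
  homotopy_invariance : ∀ (H : ℝ → (Fin k → ℂ) → (Fin k → ℂ))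
    (U : Set (Fin k → ℂ)) (y : Fin k → ℂ),
    IsOpen U → Bornology.IsBounded U →
    Continuous (fun p : ℝ × (Fin k → ℂ) => H p.1 p.2) →
    (∀ t ∈ Icc (0:ℝ) 1, ∀ x ∈ frontier U, H t x ≠ y) →
    deg (H 0) U y = deg (H 1) U y
  solution : ∀ (f : (Fin k → ℂ) → (Fin k → ℂ)) (U : Set (Fin k → ℂ))
    (y : Fin k → ℂ), IsOpen U → Bornology.IsBounded U → Continuous f →
    (∀ x ∈ frontier U, f x ≠ y) → deg f U y ≠ 0 → ∃ x ∈ U, f x = y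


noncomputable def PhiMap (k : ℕ) (w : Fin k → ℂ) : Fin k → ℂ := fun j =>
  ∑ i, if w i = 0 then 0 else
    ((‖w i‖ : ℂ)) ^ ((1 : ℤ) - (((j : ℕ) : ℤ) + 1)) * w i ^ ((j : ℕ) + 1)

namespace BMaux


lemma deg_empty {k : ℕ} (D : DegreeTheory k) (f : (Fin k → ℂ) → (Fin k → ℂ))
    (hf : Continuous f) (y : Fin k → ℂ) : D.deg f ∅ y = 0 := by
  have h := D.additivity f ∅ ∅ ∅ y isOpen_empty Bornology.isBounded_empty isOpen_empty
    isOpen_empty disjoint_bot_left (by simp) hf (by simp)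
  omega

lemma deg_finsum {k : ℕ} (D : DegreeTheory k) (f : (Fin k → ℂ) → (Fin k → ℂ))
    (hf : Continuous f) {ι : Type} [DecidableEq ι] (s : Finset ι)
    (U : Set (Fin k → ℂ)) (hU : IsOpen U) (hUb : Bornology.IsBounded U)
    (V : ι → Set (Fin k → ℂ))
    (hVo : ∀ i ∈ s, IsOpen (V i)) (hVU : ∀ i ∈ s, V i ⊆ U)
    (hdisj : ∀ i ∈ s, ∀ j ∈ s, i ≠ j → Disjoint (closure (V i)) (closure (V j)))
    (hne : ∀ x ∈ closure U, (∀ i ∈ s, x ∉ V i) → f x ≠ 0) :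
    D.deg f U 0 = ∑ i ∈ s, D.deg f (V i) 0 := by
  induction s using Finset.induction generalizing U with
  | empty =>
    have h := D.additivity f U ∅ ∅ 0 hU hUb isOpen_empty isOpen_empty disjoint_bot_left
      (by simp) hf (by
        intro x hx
        exact hne x hx.1 (by simp))
    have : D.deg f ∅ 0 = 0 := deg_empty D f hf 0
    simp only [Finset.sum_empty]
    omega
  | @insert a s ha ih =>
    have hVa : IsOpen (V a) := hVo a (Finset.mem_insert_self a s)
    have hW : IsOpen (⋃ i ∈ s, V i) := isOpen_biUnion (fun i hi => hVo i (Finset.mem_insert_of_mem hi))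
    have hdisj2 : Disjoint (V a) (⋃ i ∈ s, V i) := by
      rw [Set.disjoint_iUnion_right]
      intro i
      rw [Set.disjoint_iUnion_right]
      intro hi
      exact Disjoint.mono subset_closure subset_closure
        (hdisj a (Finset.mem_insert_self a s) i (Finset.mem_insert_of_mem hi)
          (fun h => ha (h ▸ hi)))
    have hsub : V a ∪ ⋃ i ∈ s, V i ⊆ U := by
      apply Set.union_subset (hVU a (Finset.mem_insert_self a s))
      exact Set.iUnion₂_subset fun i hi => hVU i (Finset.mem_insert_of_mem hi)
    have hadd := D.additivity f U (V a) (⋃ i ∈ s, V i) 0 hU hUb hVa hW hdisj2 hsub hf (by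
      intro x hx
      apply hne x hx.1
      intro i hi
      rcases Finset.mem_insert.mp hi with rfl | hi
      · exact fun hm => hx.2 (Set.mem_union_left _ hm)
      · exact fun hm => hx.2 (Set.mem_union_right _ (Set.mem_biUnion hi hm)))
    rw [Finset.sum_insert ha, hadd]
    congr 1
    refine ih (⋃ i ∈ s, V i) hW (hUb.subset (Set.iUnion₂_subset fun i hi => hVU i (Finset.mem_insert_of_mem hi)))
      (fun i hi => hVo i (Finset.mem_insert_of_mem hi))
      (fun i hi => Set.subset_biUnion_of_mem hi)
      (fun i hi j hj hij => hdisj i (Finset.mem_insert_of_mem hi) j (Finset.mem_insert_of_mem hj) hij)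
      ?_
    intro x hx hnot
    rw [Finset.closure_biUnion] at hx
    rcases Set.mem_iUnion₂.mp hx with ⟨i, hi, hxi⟩
    apply hne x (closure_mono (hVU i (Finset.mem_insert_of_mem hi)) hxi)
    intro i' hi'
    rcases Finset.mem_insert.mp hi' with rfl | hi'
    · intro hmem
      exact Set.disjoint_left.mp
        (hdisj i' (Finset.mem_insert_self i' s) i (Finset.mem_insert_of_mem hi)
          (fun h => ha (h ▸ hi))) (subset_closure hmem) hxi
    · exact hnot i' hi'

lemma vdm {k : ℕ} (s : Finset ℂ) (hcard : s.card ≤ k) (c : ℂ → ℂ)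
    (h : ∀ j < k, ∑ z ∈ s, c z * z ^ j = 0) : ∀ z ∈ s, c z = 0 := by
  set m := s.card with hm
  set e : Fin m ≃ {x // x ∈ s} := s.equivFin.symm with he
  set v : Fin m → ℂ := fun i => (e i : ℂ) with hv
  have hvinj : Function.Injective v := by
    intro i j hij
    exact e.injective (Subtype.ext hij)
  have hsum : ∀ (g : ℂ → ℂ), ∑ z ∈ s, g z = ∑ i : Fin m, g (v i) := by
    intro g
    rw [← Finset.sum_coe_sort s g]
    exact (Equiv.sum_comp e (fun x => g (x : ℂ))).symm
  set M : Matrix (Fin m) (Fin m) ℂ := (Matrix.vandermonde v).transpose with hM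
  have hdet : M.det ≠ 0 := by
    rw [hM, Matrix.det_transpose, Matrix.det_vandermonde]
    apply Finset.prod_ne_zero_iff.mpr
    intro i _
    apply Finset.prod_ne_zero_iff.mpr
    intro j hj
    exact sub_ne_zero_of_ne (fun hh => (Finset.mem_Ioi.mp hj).ne' (hvinj hh))
  have hmv : M.mulVec (fun i => c (v i)) = 0 := by
    funext j
    have := h (j : ℕ) (lt_of_lt_of_le j.isLt hcard)
    rw [hsum (fun z => c z * z ^ (j : ℕ))] at this
    simpa [M, Matrix.mulVec, dotProduct, Matrix.vandermonde, mul_comm] using this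
  have hz := Matrix.eq_zero_of_mulVec_eq_zero hdet hmv
  intro z hz'
  have : c (v (e.symm ⟨z, hz'⟩)) = 0 := congrFun hz (e.symm ⟨z, hz'⟩)
  simpa [hv, Equiv.apply_symm_apply] using this


/-- rescaling `z ↦ ‖z‖^(s-1) z`. -/
noncomputable def zm (s : ℝ) (z : ℂ) : ℂ := ((‖z‖ ^ (s - 1) : ℝ) : ℂ) * z

/-- the basic term of the homotopy. -/
noncomputable def Gt (n : ℕ) (p : ℝ × ℂ) : ℂ :=
  if p.2 = 0 then 0 else
    ((‖p.2‖ ^ ((1 - ((n : ℝ) + 1)) * (1 - p.1)) : ℝ) : ℂ) * p.2 ^ (n + 1)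

lemma term_eq (s : ℝ) {z : ℂ} (hz : z ≠ 0) (n : ℕ) :
    Gt n (s, z) = z * (zm s z) ^ n := by
  have hn : (0:ℝ) < ‖z‖ := norm_pos_iff.mpr hz
  rw [Gt, if_neg hz, zm]
  rw [mul_pow, ← Complex.ofReal_pow, ← Real.rpow_natCast (‖z‖ ^ (s-1)) n,
    ← Real.rpow_mul (le_of_lt hn)]
  have hexp : (1 - ((n : ℝ) + 1)) * (1 - s) = (s - 1) * n := by ring
  rw [hexp]
  ring

lemma zm_norm (s : ℝ) {z : ℂ} (hz : z ≠ 0) : ‖zm s z‖ = ‖z‖ ^ s := by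
  have hn : (0:ℝ) < ‖z‖ := norm_pos_iff.mpr hz
  rw [zm, norm_mul, Complex.norm_real, Real.norm_eq_abs,
    abs_of_nonneg (Real.rpow_nonneg (le_of_lt hn) _)]
  rw [← Real.rpow_add_one (ne_of_gt hn) (s-1)]
  norm_num

/-- Key nonvanishing lemma. -/
lemma key {k : ℕ} (s : ℝ) (w : Fin k → ℂ) (hw : w ≠ 0) :
    ∃ j : Fin k, ∑ i, (if w i = 0 then 0 else w i * (zm s (w i)) ^ (j : ℕ)) ≠ 0 := by
  by_contra hcon
  push_neg at hcon
  obtain ⟨i₀, hi₀'⟩ := Function.ne_iff.mp hw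
  have hi₀ : w i₀ ≠ 0 := by simpa using hi₀'
  classical
  set T : Finset (Fin k) := Finset.univ.filter (fun i => w i ≠ 0) with hT
  set E : Finset ℂ := T.image (fun i => zm s (w i)) with hE
  set c : ℂ → ℂ := fun z => ∑ i ∈ T.filter (fun i => zm s (w i) = z), w i with hc
  have hcard : E.card ≤ k := le_trans (Finset.card_image_le)
    (le_trans (Finset.card_filter_le _ _) (by simp))
  have hvan : ∀ j < k, ∑ z ∈ E, c z * z ^ j = 0 := by
    intro j hj
    have hfib := Finset.sum_fiberwise_of_maps_to (g := fun i => zm s (w i)) (t := E)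
      (fun i hi => Finset.mem_image_of_mem _ hi) (fun i => w i * (zm s (w i)) ^ j)
    have : ∑ z ∈ E, c z * z ^ j = ∑ i ∈ T, w i * (zm s (w i)) ^ j := by
      rw [← hfib]
      apply Finset.sum_congr rfl
      intro z _
      rw [hc, Finset.sum_mul]
      apply Finset.sum_congr rfl
      intro i hi
      rw [(Finset.mem_filter.mp hi).2]
    rw [this]
    have := hcon ⟨j, hj⟩
    rw [← this]
    rw [hT, Finset.sum_filter]
    apply Finset.sum_congr rfl
    intro i _
    by_cases h : w i = 0 <;> simp [h]
  have hall := vdm E hcard c hvan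
  have hz₀ : zm s (w i₀) ∈ E := Finset.mem_image_of_mem _ (by simp [hT, hi₀])
  have hc₀ := hall _ hz₀
  -- now show c (zm s (w i₀)) ≠ 0
  set F : Finset (Fin k) := T.filter (fun i => zm s (w i) = zm s (w i₀)) with hF
  have hmemF : ∀ i ∈ F, ∃ ρ : ℝ, 0 < ρ ∧ w i = (ρ : ℂ) * w i₀ := by
    intro i hi
    obtain ⟨hiT, hieq⟩ := Finset.mem_filter.mp hi
    have hwi : w i ≠ 0 := by simpa [hT] using (Finset.mem_filter.mp hiT).2
    have h1 : (0:ℝ) < ‖w i‖ := norm_pos_iff.mpr hwi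
    have h0 : (0:ℝ) < ‖w i₀‖ := norm_pos_iff.mpr (by simpa using hi₀)
    refine ⟨‖w i₀‖ ^ (s - 1) / ‖w i‖ ^ (s - 1), by positivity, ?_⟩
    have := hieq
    rw [zm, zm] at this
    have hne : ((‖w i‖ ^ (s - 1) : ℝ) : ℂ) ≠ 0 := by
      simp only [ne_eq, Complex.ofReal_eq_zero]
      positivity
    push_cast
    rw [div_mul_eq_mul_div, eq_div_iff hne]
    rw [mul_comm]
    exact this
  choose ρ hρpos hρeq using hmemF
  have hc₀' : ∑ i ∈ F, w i = 0 := hc₀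
  have hsum : ∑ i ∈ F, w i = ((∑ i ∈ F.attach, ρ i.1 i.2 : ℝ) : ℂ) * w i₀ := by
    rw [← Finset.sum_attach F (fun i => w i)]
    push_cast
    rw [Finset.sum_mul]
    apply Finset.sum_congr rfl
    intro i _
    exact hρeq i.1 i.2
  have hFi₀ : i₀ ∈ F := by
    rw [hF, Finset.mem_filter]
    exact ⟨by simp [hT, hi₀], rfl⟩
  have hpos : 0 < ∑ i ∈ F.attach, ρ i.1 i.2 := by
    apply Finset.sum_pos (fun i _ => hρpos i.1 i.2)
    exact ⟨⟨i₀, hFi₀⟩, Finset.mem_attach _ _⟩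
  rw [hsum] at hc₀'
  rcases mul_eq_zero.mp hc₀' with h | h
  · rw [Complex.ofReal_eq_zero] at h
    exact absurd h (ne_of_gt hpos)
  · exact hi₀ h


/-- clamped time -/
noncomputable def τ (t : ℝ) : ℝ := max 0 (min 1 t)

lemma τ_mem (t : ℝ) : τ t ∈ Icc (0:ℝ) 1 :=
  ⟨le_max_left _ _, max_le (by norm_num) (min_le_left _ _)⟩

lemma τ_zero : τ 0 = 0 := by norm_num [τ]
lemma τ_one : τ 1 = 1 := by norm_num [τ]
lemma τ_cont : Continuous τ := continuous_const.max (continuous_const.min continuous_id)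

lemma Gt_norm_le (n : ℕ) (p : ℝ × ℂ) (hs : 0 ≤ p.1) (hz : ‖p.2‖ ≤ 1) :
    ‖Gt n p‖ ≤ ‖p.2‖ := by
  rcases eq_or_ne p.2 0 with h | h
  · simp [Gt, h]
  · have hzp : (0:ℝ) < ‖p.2‖ := norm_pos_iff.mpr h
    rw [Gt, if_neg h, norm_mul, Complex.norm_real, Real.norm_eq_abs,
      abs_of_nonneg (Real.rpow_nonneg (le_of_lt hzp) _), norm_pow]
    rw [← Real.rpow_natCast ‖p.2‖ (n+1), ← Real.rpow_add hzp]
    push_cast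
    calc ‖p.2‖ ^ ((1 - ((n : ℝ) + 1)) * (1 - p.1) + ((n:ℝ) + 1))
        ≤ ‖p.2‖ ^ (1:ℝ) := by
          apply Real.rpow_le_rpow_of_exponent_ge hzp hz
          have : (1 - ((n : ℝ) + 1)) * (1 - p.1) + ((n:ℝ) + 1) = 1 + p.1 * n := by ring
          rw [this]
          have : 0 ≤ p.1 * n := mul_nonneg hs (Nat.cast_nonneg n)
          linarith
      _ = ‖p.2‖ := Real.rpow_one _

lemma Gt_contOn (n : ℕ) : ContinuousOn (Gt n) {p : ℝ × ℂ | 0 ≤ p.1} := by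
  intro p hp
  rcases eq_or_ne p.2 0 with h | h
  · -- continuity at zero via squeeze
    have : ContinuousWithinAt (Gt n) {p : ℝ × ℂ | 0 ≤ p.1} p := by
      rw [ContinuousWithinAt]
      have hval : Gt n p = 0 := by simp [Gt, h]
      rw [hval]
      apply squeeze_zero_norm' (a := fun q : ℝ × ℂ => ‖q.2‖)
      · have h1 : ∀ᶠ q : ℝ × ℂ in nhdsWithin p {p : ℝ × ℂ | 0 ≤ p.1}, ‖q.2‖ ≤ 1 := by
          apply Filter.Eventually.filter_mono nhdsWithin_le_nhds
          have : Continuous (fun q : ℝ × ℂ => ‖q.2‖) := continuous_snd.norm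
          have hlt : ‖p.2‖ < 1 := by rw [h]; norm_num
          exact (this.tendsto p).eventually (eventually_le_nhds hlt)
        have h2 : ∀ᶠ q : ℝ × ℂ in nhdsWithin p {p : ℝ × ℂ | 0 ≤ p.1}, 0 ≤ q.1 :=
          eventually_mem_nhdsWithin
        filter_upwards [h1, h2] with q hq1 hq2
        exact Gt_norm_le n q hq2 hq1
      · have hc : ContinuousWithinAt (fun q : ℝ × ℂ => ‖q.2‖) {p : ℝ × ℂ | 0 ≤ p.1} p :=
          (continuous_snd.norm.continuousAt).continuousWithinAt
        rw [ContinuousWithinAt] at hc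
        simpa [h] using hc
    exact this
  · -- continuity at nonzero points
    apply ContinuousAt.continuousWithinAt
    have hopen : IsOpen {q : ℝ × ℂ | q.2 ≠ 0} := isOpen_ne.preimage continuous_snd
    have hev : ∀ᶠ q : ℝ × ℂ in nhds p, Gt n q =
        ((‖q.2‖ ^ ((1 - ((n : ℝ) + 1)) * (1 - q.1)) : ℝ) : ℂ) * q.2 ^ (n + 1) := by
      filter_upwards [hopen.mem_nhds h] with q hq
      rw [Gt, if_neg hq]
    apply ContinuousAt.congr _ (Filter.EventuallyEq.symm hev)
    apply ContinuousAt.mul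
    · apply Complex.continuous_ofReal.continuousAt.comp
      have h1 : ContinuousAt (fun q : ℝ × ℝ => q.1 ^ q.2) (‖p.2‖, (1 - ((n : ℝ) + 1)) * (1 - p.1)) :=
        Real.continuousAt_rpow _ (Or.inl (ne_of_gt (norm_pos_iff.mpr h)))
      have h2 : ContinuousAt (fun q : ℝ × ℂ => (‖q.2‖, (1 - ((n : ℝ) + 1)) * (1 - q.1))) p := by
        fun_prop
      have h3 := ContinuousAt.comp (x := p) h1 h2
      simp only [Function.comp_def] at h3
      exact h3
    · fun_prop

/-- the homotopy from Φ to the power sum map -/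
noncomputable def H1 (k : ℕ) (t : ℝ) (w : Fin k → ℂ) : Fin k → ℂ :=
  fun j => ∑ i, Gt (j : ℕ) (τ t, w i)

lemma H1_cont (k : ℕ) : Continuous (fun p : ℝ × (Fin k → ℂ) => H1 k p.1 p.2) := by
  apply continuous_pi
  intro j
  apply continuous_finset_sum
  intro i _
  apply (Gt_contOn (j : ℕ)).comp_continuous
  · exact ((τ_cont.comp continuous_fst).prodMk
      ((continuous_apply i).comp continuous_snd))
  · intro x
    exact (τ_mem x.1).1

lemma H1_eq_zm (k : ℕ) (t : ℝ) (w : Fin k → ℂ) (j : Fin k) :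
    H1 k t w j = ∑ i, (if w i = 0 then 0 else w i * (zm (τ t) (w i)) ^ (j : ℕ)) := by
  apply Finset.sum_congr rfl
  intro i _
  rcases eq_or_ne (w i) 0 with h | h
  · simp [Gt, h]
  · rw [if_neg h, term_eq (τ t) h (j : ℕ)]

lemma H1_ne_zero (k : ℕ) (t : ℝ) (w : Fin k → ℂ) (hw : w ≠ 0) : H1 k t w ≠ 0 := by
  obtain ⟨j, hj⟩ := key (τ t) w hw
  intro hcon
  apply hj
  rw [← H1_eq_zm]
  exact congrFun hcon j


noncomputable def Pmap (k : ℕ) (w : Fin k → ℂ) : Fin k → ℂ :=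
  fun j => ∑ i, w i ^ ((j : ℕ) + 1)

lemma H1_zero (k : ℕ) : H1 k 0 = PhiMap k := by
  funext w j
  apply Finset.sum_congr rfl
  intro i _
  rcases eq_or_ne (w i) 0 with h | h
  · simp [Gt, h]
  · rw [Gt, if_neg h, if_neg h]
    congr 1
    have hτ : τ (0:ℝ) = 0 := τ_zero
    rw [hτ]
    have he : ((1:ℝ) - (((j : ℕ) : ℝ) + 1)) * (1 - 0) = (((1 : ℤ) - (((j : ℕ) : ℤ) + 1) : ℤ) : ℝ) := by
      push_cast; ring
    rw [he, Real.rpow_intCast, Complex.ofReal_zpow]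

lemma H1_one (k : ℕ) : H1 k 1 = Pmap k := by
  funext w j
  apply Finset.sum_congr rfl
  intro i _
  rcases eq_or_ne (w i) 0 with h | h
  · simp [Gt, h]
  · rw [Gt, if_neg h, τ_one]
    norm_num

lemma Phi_zero_iff (k : ℕ) (w : Fin k → ℂ) : PhiMap k w = 0 ↔ w = 0 := by
  constructor
  · intro h
    by_contra hw
    exact H1_ne_zero k 0 w hw (by rw [H1_zero]; exact h)
  · rintro rfl
    funext j
    simp [PhiMap]

lemma psum_to_esymm {k : ℕ} (w ξ : Fin k → ℂ)
    (hp : ∀ n, 1 ≤ n → n ≤ k → ∑ i, w i ^ n = ∑ i, ξ i ^ n) :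
    ∀ n ≤ k, MvPolynomial.aeval w (MvPolynomial.esymm (Fin k) ℂ n) =
      MvPolynomial.aeval ξ (MvPolynomial.esymm (Fin k) ℂ n) := by
  intro n hn
  induction n using Nat.strong_induction_on with
  | _ n ih =>
    rcases Nat.eq_zero_or_pos n with rfl | hpos
    · simp [MvPolynomial.esymm_zero]
    · have hrec := MvPolynomial.mul_esymm_eq_sum (Fin k) ℂ n
      have hw := congrArg (MvPolynomial.aeval w) hrec
      have hξ := congrArg (MvPolynomial.aeval ξ) hrec
      have haevalpsum : ∀ (v : Fin k → ℂ) (m : ℕ),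
          MvPolynomial.aeval v (MvPolynomial.psum (Fin k) ℂ m) = ∑ i, v i ^ m := by
        intro v m
        simp [MvPolynomial.psum, map_sum, map_pow, MvPolynomial.aeval_X]
      simp only [map_mul, map_sum, map_pow, map_neg, map_one, map_natCast] at hw hξ
      simp only [haevalpsum] at hw hξ
      have hsums : ∑ x ∈ Finset.filter (fun a => a.1 < n) (Finset.HasAntidiagonal.antidiagonal n),
          (-1:ℂ) ^ x.1 * (MvPolynomial.aeval w) (MvPolynomial.esymm (Fin k) ℂ x.1) *
            (∑ i, w i ^ x.2) =
          ∑ x ∈ Finset.filter (fun a => a.1 < n) (Finset.HasAntidiagonal.antidiagonal n),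
          (-1:ℂ) ^ x.1 * (MvPolynomial.aeval ξ) (MvPolynomial.esymm (Fin k) ℂ x.1) *
            (∑ i, ξ i ^ x.2) := by
        apply Finset.sum_congr rfl
        intro a ha
        obtain ⟨hmem, hlt⟩ := Finset.mem_filter.mp ha
        have hadd : a.1 + a.2 = n := Finset.HasAntidiagonal.mem_antidiagonal.mp hmem
        have h2pos : 1 ≤ a.2 := by omega
        have h2le : a.2 ≤ k := by omega
        have h1le : a.1 ≤ k := by omega
        rw [ih a.1 hlt h1le, hp a.2 h2pos h2le]
      rw [hsums] at hw
      have hn0 : (n:ℂ) ≠ 0 := Nat.cast_ne_zero.mpr (by omega)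
      exact mul_left_cancel₀ hn0 (hw.trans hξ.symm)

lemma psum_multiset {k : ℕ} (w ξ : Fin k → ℂ)
    (hp : ∀ n, 1 ≤ n → n ≤ k → ∑ i, w i ^ n = ∑ i, ξ i ^ n) :
    Multiset.map w Finset.univ.val = Multiset.map ξ Finset.univ.val := by
  classical
  set Mw := Multiset.map w Finset.univ.val with hMw
  set Mξ := Multiset.map ξ Finset.univ.val with hMξ
  have hcardw : Multiset.card Mw = k := by simp [hMw]
  have hcardξ : Multiset.card Mξ = k := by simp [hMξ]
  have hesymm : ∀ n ≤ k, Mw.esymm n = Mξ.esymm n := by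
    intro n hn
    have h1 := MvPolynomial.aeval_esymm_eq_multiset_esymm (Fin k) ℂ n w
    have h2 := MvPolynomial.aeval_esymm_eq_multiset_esymm (Fin k) ℂ n ξ
    rw [← h1, ← h2]
    exact psum_to_esymm w ξ hp n hn
  have hprod : (Mw.map (fun a => Polynomial.X - Polynomial.C a)).prod =
      (Mξ.map (fun a => Polynomial.X - Polynomial.C a)).prod := by
    apply Polynomial.ext
    intro m
    rcases le_or_gt m k with hm | hm
    · rw [Multiset.prod_X_sub_C_coeff Mw (by omega), Multiset.prod_X_sub_C_coeff Mξ (by omega),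
        hcardw, hcardξ, hesymm (k - m) (by omega)]
    · rw [Polynomial.coeff_eq_zero_of_natDegree_lt, Polynomial.coeff_eq_zero_of_natDegree_lt]
      · rw [Polynomial.natDegree_multiset_prod_X_sub_C_eq_card, hcardξ]; exact hm
      · rw [Polynomial.natDegree_multiset_prod_X_sub_C_eq_card, hcardw]; exact hm
  have := congrArg Polynomial.roots hprod
  rwa [Polynomial.roots_multiset_prod_X_sub_C, Polynomial.roots_multiset_prod_X_sub_C] at this

lemma exists_perm {k : ℕ} (w ξ : Fin k → ℂ) (hξ : Function.Injective ξ)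
    (hm : Multiset.map w Finset.univ.val = Multiset.map ξ Finset.univ.val) :
    ∃ σ : Equiv.Perm (Fin k), w = ξ ∘ σ := by
  classical
  have hnodupξ : (Multiset.map ξ Finset.univ.val).Nodup :=
    Multiset.Nodup.map hξ Finset.univ.nodup
  have hnodupw : (Multiset.map w Finset.univ.val).Nodup := hm ▸ hnodupξ
  have hwinj : Function.Injective w := by
    intro a b hab
    exact Multiset.inj_on_of_nodup_map hnodupw a (by simp) b (by simp) hab
  have hrange : ∀ i, ∃ i', ξ i' = w i := by
    intro i
    have : w i ∈ Multiset.map ξ Finset.univ.val := by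
      rw [← hm]
      exact Multiset.mem_map_of_mem w (by simp)
    obtain ⟨i', _, hi'⟩ := Multiset.mem_map.mp this
    exact ⟨i', hi'⟩
  choose g hg using hrange
  have hginj : Function.Injective g := by
    intro a b hab
    apply hwinj
    rw [← hg a, ← hg b, hab]
  have hgbij : Function.Bijective g := Finite.injective_iff_bijective.mp hginj
  refine ⟨Equiv.ofBijective g hgbij, ?_⟩
  funext i
  simp only [Function.comp_apply, Equiv.ofBijective_apply]
  exact (hg i).symm


noncomputable def Mmat {k : ℕ} (ξ : Fin k → ℂ) : Matrix (Fin k) (Fin k) ℂ :=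
  Matrix.of fun j i => (((j : ℕ) : ℂ) + 1) * ξ i ^ (j : ℕ)

noncomputable def toCLM {k : ℕ} (M : Matrix (Fin k) (Fin k) ℂ) :
    (Fin k → ℂ) →L[ℂ] (Fin k → ℂ) :=
  LinearMap.toContinuousLinearMap M.mulVecLin

lemma toCLM_apply {k : ℕ} (M : Matrix (Fin k) (Fin k) ℂ) (v : Fin k → ℂ) :
    toCLM M v = M.mulVec v := rfl

lemma Mmat_det_ne_zero {k : ℕ} {ξ : Fin k → ℂ} (hξ : Function.Injective ξ) :
    (Mmat ξ).det ≠ 0 := by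
  have heq : Mmat ξ = Matrix.of fun (j i : Fin k) =>
      (((j : ℕ) : ℂ) + 1) * (Matrix.vandermonde ξ).transpose j i := by
    ext j i
    simp [Mmat, Matrix.vandermonde]
  rw [heq, Matrix.det_mul_column, Matrix.det_transpose, Matrix.det_vandermonde]
  apply mul_ne_zero
  · apply Finset.prod_ne_zero_iff.mpr
    intro j _
    exact Nat.cast_add_one_ne_zero (j : ℕ)
  · apply Finset.prod_ne_zero_iff.mpr
    intro i _
    apply Finset.prod_ne_zero_iff.mpr
    intro j hj
    exact sub_ne_zero_of_ne (fun hh => (Finset.mem_Ioi.mp hj).ne' (hξ hh))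

lemma hasFDeriv_Pmap {k : ℕ} (y : Fin k → ℂ) (ξ : Fin k → ℂ) :
    HasFDerivAt (fun w => Pmap k w - y) (toCLM (Mmat ξ)) ξ := by
  apply HasFDerivAt.sub_const
  rw [hasFDerivAt_pi']
  intro j
  have hcomp : ∀ i : Fin k, HasFDerivAt (fun w : Fin k → ℂ => w i ^ ((j : ℕ) + 1))
      (((((j : ℕ) : ℂ) + 1) * ξ i ^ (j : ℕ)) •
        (ContinuousLinearMap.proj i : (Fin k → ℂ) →L[ℂ] ℂ)) ξ := by
    intro i
    have h1 : HasDerivAt (fun z : ℂ => z ^ ((j : ℕ) + 1))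
        ((((j : ℕ) : ℂ) + 1) * ξ i ^ (j : ℕ)) (ξ i) := by
      have := hasDerivAt_pow ((j : ℕ) + 1) (ξ i)
      simpa using this
    have h2 := h1.comp_hasFDerivAt ξ
      (ContinuousLinearMap.proj i : (Fin k → ℂ) →L[ℂ] ℂ).hasFDerivAt
    simpa [Function.comp_def] using h2
  have hsum := HasFDerivAt.fun_sum (fun i (_ : i ∈ Finset.univ) => hcomp i)
  convert hsum using 1
  · rfl
  apply ContinuousLinearMap.ext
  intro v
  simp [toCLM, Mmat, Matrix.mulVec, dotProduct, Finset.mul_sum, mul_comm, mul_assoc]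

lemma exists_antilip {k : ℕ} {M : Matrix (Fin k) (Fin k) ℂ} (hdet : M.det ≠ 0) :
    ∃ C > 0, ∀ v : Fin k → ℂ, ‖v‖ ≤ C * ‖toCLM M v‖ := by
  classical
  have hinv := M.invertibleOfIsUnitDet (isUnit_iff_ne_zero.mpr hdet)
  set eL : (Fin k → ℂ) ≃ₗ[ℂ] (Fin k → ℂ) := M.toLinearEquiv' hinv with heL
  set eC := eL.toContinuousLinearEquiv with heC
  refine ⟨‖(eC.symm : (Fin k → ℂ) →L[ℂ] (Fin k → ℂ))‖ + 1, by positivity, ?_⟩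
  intro v
  have hco : eC v = toCLM M v := rfl
  have h2 : ‖v‖ ≤ ‖(eC.symm : (Fin k → ℂ) →L[ℂ] (Fin k → ℂ))‖ * ‖eC v‖ := by
    have := ContinuousLinearMap.le_opNorm
      (eC.symm : (Fin k → ℂ) →L[ℂ] (Fin k → ℂ)) (eC v)
    simpa using this
  rw [← hco]
  have := norm_nonneg (eC v)
  nlinarith

lemma exists_matrix_path {k : ℕ} {M : Matrix (Fin k) (Fin k) ℂ} (hdet : M.det ≠ 0) :
    ∃ A : ℝ → Matrix (Fin k) (Fin k) ℂ,
      (∀ j i, Continuous fun t => A t j i) ∧ A 0 = M ∧ A 1 = 1 ∧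
      ∀ t, (A t).det ≠ 0 := by
  classical
  set q : Polynomial ℂ := (Matrix.of fun j i => Polynomial.C (M j i) +
      Polynomial.X * (Polynomial.C ((1 : Matrix (Fin k) (Fin k) ℂ) j i) -
        Polynomial.C (M j i))).det with hqdef
  have hq : ∀ z : ℂ, q.eval z =
      ((1 - z) • M + z • (1 : Matrix (Fin k) (Fin k) ℂ)).det := by
    intro z
    rw [show q.eval z = (Polynomial.evalRingHom z) q from rfl, hqdef, RingHom.map_det]
    congr 1
    ext j i
    simp [Matrix.add_apply, Matrix.smul_apply, RingHom.mapMatrix_apply, Matrix.map_apply,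
      smul_eq_mul]
    ring
  have hq0 : q.eval 0 = M.det := by rw [hq]; simp
  have hq1 : q.eval 1 = 1 := by rw [hq]; simp
  have hqne : q ≠ 0 := fun h => hdet (by rw [← hq0, h, Polynomial.eval_zero])
  have hfin : {z : ℂ | q.IsRoot z}.Finite := Polynomial.finite_setOf_isRoot hqne
  have hpc : IsPathConnected {z : ℂ | q.IsRoot z}ᶜ :=
    Set.Countable.isPathConnected_compl_of_one_lt_rank
      (by rw [Complex.rank_real_complex]; norm_num) hfin.countable
  have h0 : (0:ℂ) ∈ {z : ℂ | q.IsRoot z}ᶜ := by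
    simp only [mem_compl_iff, mem_setOf_eq, Polynomial.IsRoot]
    rw [hq0]; exact hdet
  have h1 : (1:ℂ) ∈ {z : ℂ | q.IsRoot z}ᶜ := by
    simp only [mem_compl_iff, mem_setOf_eq, Polynomial.IsRoot]
    rw [hq1]; exact one_ne_zero
  obtain ⟨γ, hγ⟩ := hpc.joinedIn 0 h0 1 h1
  set c : ℝ → ℂ := fun t => γ (Set.projIcc 0 1 zero_le_one t) with hcdef
  have hccont : Continuous c := γ.continuous.comp continuous_projIcc
  have hc0 : c 0 = 0 := by
    rw [hcdef]; simp only [Set.projIcc_left]; exact γ.source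
  have hc1 : c 1 = 1 := by
    rw [hcdef]; simp only [Set.projIcc_right]; exact γ.target
  refine ⟨fun t => (1 - c t) • M + (c t) • 1, ?_, ?_, ?_, ?_⟩
  · intro j i
    simp only [Matrix.add_apply, Matrix.smul_apply, smul_eq_mul]
    fun_prop
  · show (1 - c 0) • M + c 0 • 1 = M
    rw [hc0]; simp
  · show (1 - c 1) • M + c 1 • 1 = 1
    rw [hc1]; simp
  · intro t
    show ((1 - c t) • M + c t • 1).det ≠ 0
    rw [← hq]
    exact fun h => (hγ (Set.projIcc 0 1 zero_le_one t)) h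

lemma local_deg {k : ℕ} (D : DegreeTheory k) (f : (Fin k → ℂ) → (Fin k → ℂ))
    (hf : Continuous f) (ξ : Fin k → ℂ) (hroot : f ξ = 0)
    (M : Matrix (Fin k) (Fin k) ℂ) (hdet : M.det ≠ 0)
    (hL : HasFDerivAt f (toCLM M) ξ) :
    ∃ r₀ > 0, ∀ r, 0 < r → r ≤ r₀ → D.deg f (Metric.ball ξ r) 0 = 1 := by
  obtain ⟨C, hC, hanti⟩ := exists_antilip hdet
  have hlittle := hL.isLittleO.def (show (0:ℝ) < 1/(2*C) by positivity)
  rw [hroot] at hlittle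
  rw [Metric.eventually_nhds_iff] at hlittle
  obtain ⟨ε, hε, herr⟩ := hlittle
  refine ⟨ε/2, by positivity, ?_⟩
  intro r hr hrε
  have hrlt : r < ε := by linarith
  have hfr : frontier (Metric.ball ξ r) = Metric.sphere ξ r := frontier_ball ξ (ne_of_gt hr)
  have hball_open : IsOpen (Metric.ball ξ r) := Metric.isOpen_ball
  have hball_bdd : Bornology.IsBounded (Metric.ball ξ r) := Metric.isBounded_ball
  -- Step 1 : homotope f to the affine map x ↦ M(x-ξ)
  set L : (Fin k → ℂ) → (Fin k → ℂ) := fun x => toCLM M (x - ξ) with hLdef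
  have hsphere_bound : ∀ x ∈ Metric.sphere ξ r, ∀ t ∈ Icc (0:ℝ) 1,
      toCLM M (x - ξ) + t • (f x - toCLM M (x - ξ)) ≠ 0 := by
    intro x hx t ht hcon
    have hdist : dist x ξ = r := Metric.mem_sphere.mp hx
    have hnorm : ‖x - ξ‖ = r := by rwa [← dist_eq_norm]
    have herrx : ‖f x - toCLM M (x - ξ)‖ ≤ 1/(2*C) * ‖x - ξ‖ := by
      have := herr (show dist x ξ < ε by rw [hdist]; exact hrlt)
      simpa using this
    have h1 : toCLM M (x - ξ) = -(t • (f x - toCLM M (x - ξ))) := by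
      rw [eq_neg_iff_add_eq_zero]; exact hcon
    have h2 : ‖toCLM M (x - ξ)‖ ≤ 1/(2*C) * r := by
      rw [h1, norm_neg, norm_smul, Real.norm_eq_abs, abs_of_nonneg ht.1]
      calc t * ‖f x - toCLM M (x - ξ)‖ ≤ 1 * (1/(2*C) * ‖x - ξ‖) :=
            mul_le_mul ht.2 herrx (norm_nonneg _) zero_le_one
        _ = 1/(2*C) * r := by rw [one_mul, hnorm]
    have h3 : ‖x - ξ‖ ≤ C * (1/(2*C) * r) :=
      le_trans (hanti (x - ξ)) (by
        apply mul_le_mul_of_nonneg_left h2 (le_of_lt hC))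
    rw [hnorm] at h3
    have : C * (1/(2*C) * r) = r/2 := by field_simp
    rw [this] at h3
    linarith
  have step1 : D.deg f (Metric.ball ξ r) 0 = D.deg L (Metric.ball ξ r) 0 := by
    set HA : ℝ → (Fin k → ℂ) → (Fin k → ℂ) :=
      fun t x => toCLM M (x - ξ) + τ t • (f x - toCLM M (x - ξ)) with hHA
    have hcont : Continuous (fun p : ℝ × (Fin k → ℂ) => HA p.1 p.2) := by
      apply Continuous.add
      · exact (toCLM M).continuous.comp (continuous_snd.sub continuous_const)
      · exact (τ_cont.comp continuous_fst).smul
          ((hf.comp continuous_snd).sub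
            ((toCLM M).continuous.comp (continuous_snd.sub continuous_const)))
    have hfront : ∀ t ∈ Icc (0:ℝ) 1, ∀ x ∈ frontier (Metric.ball ξ r), HA t x ≠ 0 := by
      intro t ht x hx
      rw [hfr] at hx
      exact hsphere_bound x hx (τ t) (τ_mem t)
    have h := D.homotopy_invariance HA (Metric.ball ξ r) 0 hball_open hball_bdd hcont hfront
    have e0 : HA 0 = L := by
      funext x; simp only [hHA, hLdef, τ_zero, zero_smul, add_zero]
    have e1 : HA 1 = f := by
      funext x; simp only [hHA, τ_one, one_smul]; abel
    rw [e0, e1] at h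
    exact h.symm
  -- Step 2 : homotope the linear map to the translation x ↦ x - ξ
  obtain ⟨A, hAcont, hA0, hA1, hAdet⟩ := exists_matrix_path hdet
  have step2 : D.deg L (Metric.ball ξ r) 0 =
      D.deg (fun x => x - ξ) (Metric.ball ξ r) 0 := by
    set HB : ℝ → (Fin k → ℂ) → (Fin k → ℂ) :=
      fun t x => (A t).mulVec (x - ξ) with hHB
    have hcont : Continuous (fun p : ℝ × (Fin k → ℂ) => HB p.1 p.2) := by
      apply continuous_pi
      intro j
      simp only [hHB, Matrix.mulVec, dotProduct]
      apply continuous_finset_sum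
      intro i _
      exact ((hAcont j i).comp continuous_fst).mul
        (((continuous_apply i).comp continuous_snd).sub continuous_const)
    have hfront : ∀ t ∈ Icc (0:ℝ) 1, ∀ x ∈ frontier (Metric.ball ξ r), HB t x ≠ 0 := by
      intro t _ x hx hcon
      rw [hfr] at hx
      have hsub := Matrix.eq_zero_of_mulVec_eq_zero (hAdet t) hcon
      have : ‖x - ξ‖ = r := by
        rw [← dist_eq_norm]; exact Metric.mem_sphere.mp hx
      rw [hsub] at this
      simp at this
      linarith
    have h := D.homotopy_invariance HB (Metric.ball ξ r) 0 hball_open hball_bdd hcont hfront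
    have e0 : HB 0 = L := by
      funext x; simp only [hHB, hA0, hLdef, toCLM_apply]
    have e1 : HB 1 = fun x => x - ξ := by
      funext x; simp only [hHB, hA1]; exact Matrix.one_mulVec _
    rw [e0, e1] at h
    exact h
  -- Step 3 : excision to a big ball around the origin
  set R : ℝ := ‖ξ‖ + r + 1 with hR
  have hRpos : 0 < R := by positivity
  have hsub : Metric.ball ξ r ⊆ Metric.ball (0 : Fin k → ℂ) R := by
    intro x hx
    rw [Metric.mem_ball] at hx ⊢
    calc dist x 0 ≤ dist x ξ + dist ξ 0 := dist_triangle _ _ _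
      _ < r + ‖ξ‖ := by
          rw [dist_zero_right]
          linarith
      _ < R := by rw [hR]; linarith
  have step3 : D.deg (fun x => x - ξ) (Metric.ball ξ r) 0 =
      D.deg (fun x => x - ξ) (Metric.ball (0 : Fin k → ℂ) R) 0 := by
    have h := deg_finsum D (fun x => x - ξ) (continuous_id.sub continuous_const)
      ({0} : Finset ℕ) (Metric.ball (0 : Fin k → ℂ) R) Metric.isOpen_ball
      Metric.isBounded_ball (fun _ => Metric.ball ξ r)
      (fun _ _ => Metric.isOpen_ball) (fun _ _ => hsub)
      (fun i hi j hj hij => by simp at hi hj; omega)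
      ?_
    · rw [h, Finset.sum_singleton]
    · intro x _ hnot
      have hx : x ∉ Metric.ball ξ r := hnot 0 (Finset.mem_singleton_self 0)
      intro hcon
      rw [sub_eq_zero] at hcon
      apply hx
      rw [hcon]
      exact Metric.mem_ball_self hr
  -- Step 4 : homotope the translation to the identity on the big ball
  have step4 : D.deg (fun x => x - ξ) (Metric.ball (0 : Fin k → ℂ) R) 0 = 1 := by
    set HC : ℝ → (Fin k → ℂ) → (Fin k → ℂ) :=
      fun t x => x - (1 - τ t) • ξ with hHC
    have hcont : Continuous (fun p : ℝ × (Fin k → ℂ) => HC p.1 p.2) := by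
      apply Continuous.sub continuous_snd
      exact (continuous_const.sub (τ_cont.comp continuous_fst)).smul continuous_const
    have hfront : ∀ t ∈ Icc (0:ℝ) 1, ∀ x ∈ frontier (Metric.ball (0 : Fin k → ℂ) R),
        HC t x ≠ 0 := by
      intro t _ x hx hcon
      rw [frontier_ball (0 : Fin k → ℂ) (ne_of_gt hRpos)] at hx
      have hxn : ‖x‖ = R := by
        have := Metric.mem_sphere.mp hx
        rwa [dist_zero_right] at this
      rw [hHC] at hcon
      simp only [sub_eq_zero] at hcon
      have hτ := τ_mem t
      have : ‖x‖ ≤ ‖ξ‖ := by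
        rw [hcon, norm_smul, Real.norm_eq_abs, abs_of_nonneg (by linarith [hτ.2] : (0:ℝ) ≤ 1 - τ t)]
        have h1 : 1 - τ t ≤ 1 := by linarith [hτ.1]
        nlinarith [norm_nonneg ξ]
      rw [hxn, hR] at this
      linarith
    have h := D.homotopy_invariance HC (Metric.ball (0 : Fin k → ℂ) R) 0
      Metric.isOpen_ball Metric.isBounded_ball hcont hfront
    have e0 : HC 0 = fun x => x - ξ := by
      funext x; simp only [hHC, τ_zero]; norm_num
    have e1 : HC 1 = id := by
      funext x; simp only [hHC, τ_one]; norm_num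
    rw [e0, e1] at h
    rw [h]
    exact D.normalization _ 0 Metric.isOpen_ball Metric.isBounded_ball
      (Metric.mem_ball_self hRpos)
  rw [step1, step2, step3, step4]



set_option maxHeartbeats 2000000 in
lemma main_deg {k : ℕ} (hk : 0 < k) (D : DegreeTheory k) :
    D.deg (PhiMap k) {w : Fin k → ℂ | ∑ i, ‖w i‖ < 1} 0 = (Nat.factorial k : ℤ) := by
  classical
  set R : Set (Fin k → ℂ) := {w | ∑ i, ‖w i‖ < 1} with hRdef
  have hg : Continuous (fun w : Fin k → ℂ => ∑ i, ‖w i‖) :=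
    continuous_finset_sum _ (fun i _ => (continuous_apply i).norm)
  have hRo : IsOpen R := isOpen_lt hg continuous_const
  have hRsub : R ⊆ Metric.closedBall 0 1 := by
    intro w hw
    rw [Metric.mem_closedBall, dist_zero_right]
    apply pi_norm_le_iff_of_nonneg zero_le_one |>.mpr
    intro i
    calc ‖w i‖ ≤ ∑ i', ‖w i'‖ :=
          Finset.single_le_sum (fun i' _ => norm_nonneg (w i')) (Finset.mem_univ i)
      _ ≤ 1 := le_of_lt hw
  have hRb : Bornology.IsBounded R := Metric.isBounded_closedBall.subset hRsub
  have hclosR : closure R ⊆ {w : Fin k → ℂ | ∑ i, ‖w i‖ ≤ 1} :=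
    closure_minimal (fun w hw => le_of_lt (show ∑ i, ‖w i‖ < 1 from hw))
      (isClosed_le hg continuous_const)
  have hfrontR : ∀ x ∈ frontier R, ∑ i, ‖x i‖ = 1 := by
    intro x hx
    rw [hRo.frontier_eq] at hx
    have h1 : ∑ i, ‖x i‖ ≤ 1 := hclosR hx.1
    have h2 : ¬ (∑ i, ‖x i‖ < 1) := hx.2
    push_neg at h2
    linarith
  have hfront_ne : ∀ x ∈ frontier R, x ≠ 0 := by
    intro x hx hcon
    subst hcon
    have := hfrontR 0 hx
    simp at this
  -- compactness of the frontier and minimum of ‖Pmap‖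
  have hPcont : Continuous (Pmap k) :=
    continuous_pi (fun j => continuous_finset_sum _
      (fun i _ => (continuous_apply i).pow _))
  have hfront_sub : frontier R ⊆ Metric.closedBall 0 1 := by
    rw [hRo.frontier_eq]
    exact fun x hx => (closure_minimal hRsub Metric.isClosed_closedBall) hx.1
  have hKfront : IsCompact (frontier R) :=
    IsCompact.of_isClosed_subset (isCompact_closedBall 0 1) isClosed_frontier hfront_sub
  -- nonempty frontier
  have i0 : Fin k := ⟨0, hk⟩
  set x₀ : Fin k → ℂ := fun i => if i = i0 then 1 else 0 with hx₀def
  have hx₀sum : ∑ i, ‖x₀ i‖ = 1 := by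
    rw [hx₀def]
    simp [apply_ite]
  have hx₀clos : x₀ ∈ closure R := by
    have htend : Filter.Tendsto (fun n : ℕ => (1 - 1/((n:ℝ)+1)) • x₀)
        Filter.atTop (nhds x₀) := by
      have h1 : Filter.Tendsto (fun n : ℕ => 1 - 1/((n:ℝ)+1)) Filter.atTop (nhds 1) := by
        have := tendsto_one_div_add_atTop_nhds_zero_nat (𝕜 := ℝ)
        have h2 := Filter.Tendsto.const_sub (1:ℝ) this
        simpa using h2
      have := Filter.Tendsto.smul h1 (tendsto_const_nhds (x := x₀))
      simpa using this
    refine mem_closure_of_tendsto htend ?_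
    apply Filter.Eventually.of_forall
    intro n
    have hpos : (0:ℝ) < 1/((n:ℝ)+1) := by positivity
    have hle : 1/((n:ℝ)+1) ≤ 1 := by
      rw [div_le_one (by positivity)]
      simp
    show ∑ i, ‖((1 - 1/((n:ℝ)+1)) • x₀) i‖ < 1
    have heq : ∑ i, ‖((1 - 1/((n:ℝ)+1)) • x₀) i‖ = (1 - 1/((n:ℝ)+1)) * ∑ i, ‖x₀ i‖ := by
      rw [Finset.mul_sum]
      apply Finset.sum_congr rfl
      intro i _
      rw [Pi.smul_apply, norm_smul, Real.norm_eq_abs,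
        abs_of_nonneg (by linarith : (0:ℝ) ≤ 1 - 1/((n:ℝ)+1))]
    rw [heq, hx₀sum, mul_one]
    linarith
  have hx₀front : x₀ ∈ frontier R := by
    rw [hRo.frontier_eq]
    refine ⟨hx₀clos, ?_⟩
    rw [hRdef, mem_setOf_eq, hx₀sum]
    simp
  obtain ⟨xm, hxm, hmin⟩ := hKfront.exists_isMinOn ⟨x₀, hx₀front⟩
    ((hPcont.norm).continuousOn)
  set c : ℝ := ‖Pmap k xm‖ with hcdef
  have hc : 0 < c := by
    rw [hcdef, norm_pos_iff]
    have hxmne : xm ≠ 0 := hfront_ne xm hxm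
    have := H1_ne_zero k 1 xm hxmne
    rwa [H1_one] at this
  -- the reference point ξ
  set B : ℝ := ∑ i : Fin k, (((i:ℕ):ℝ) + 1) with hBdef
  have hB : 0 < B := by
    rw [hBdef]
    apply Finset.sum_pos (fun i _ => by positivity)
    exact ⟨i0, Finset.mem_univ i0⟩
  have hmc : 0 < min 1 c := lt_min one_pos hc
  set ε : ℝ := min 1 c / (2*B) with hεdef
  have hε : 0 < ε := div_pos hmc (by positivity)
  have hεB : ε * B < min 1 c := by
    rw [hεdef, div_mul_eq_mul_div, mul_div_assoc]
    have : B / (2*B) = 1/2 := by field_simp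
    rw [this]
    linarith
  set ξ : Fin k → ℂ := fun i => ((ε * (((i:ℕ):ℝ)+1) : ℝ) : ℂ) with hξdef
  have hξinj : Function.Injective ξ := by
    intro a b hab
    rw [hξdef] at hab
    have h1 : ε * (((a:ℕ):ℝ)+1) = ε * (((b:ℕ):ℝ)+1) := Complex.ofReal_inj.mp hab
    have h2 : (((a:ℕ):ℝ)+1) = (((b:ℕ):ℝ)+1) := mul_left_cancel₀ (ne_of_gt hε) h1
    have h2' : ((a:ℕ):ℝ) = ((b:ℕ):ℝ) := by linarith
    have h3 : (a:ℕ) = (b:ℕ) := by exact_mod_cast h2'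
    exact Fin.ext h3
  have hξnorm : ∑ i, ‖ξ i‖ = ε * B := by
    rw [hξdef, hBdef, Finset.mul_sum]
    apply Finset.sum_congr rfl
    intro i _
    rw [Complex.norm_real, Real.norm_eq_abs, abs_of_nonneg (by positivity)]
  have hξR : ∑ i, ‖ξ i‖ < 1 := by
    rw [hξnorm]
    exact lt_of_lt_of_le hεB (min_le_left _ _)
  set y : Fin k → ℂ := Pmap k ξ with hydef
  have hynorm : ‖y‖ ≤ ε * B := by
    apply pi_norm_le_iff_of_nonneg (by positivity) |>.mpr
    intro j
    rw [hydef]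
    calc ‖Pmap k ξ j‖ ≤ ∑ i, ‖ξ i‖^((j:ℕ)+1) := by
          rw [Pmap]
          refine le_trans (norm_sum_le _ _) ?_
          apply Finset.sum_le_sum
          intro i _
          rw [norm_pow]
      _ ≤ ∑ i, ‖ξ i‖ := by
          apply Finset.sum_le_sum
          intro i _
          apply pow_le_of_le_one (norm_nonneg _) _ (by omega)
          calc ‖ξ i‖ ≤ ∑ i', ‖ξ i'‖ :=
                Finset.single_le_sum (fun i' _ => norm_nonneg (ξ i')) (Finset.mem_univ i)
            _ ≤ 1 := le_of_lt hξR
      _ = ε * B := hξnorm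
  have hyc : ‖y‖ < c := lt_of_le_of_lt hynorm (lt_of_lt_of_le hεB (min_le_right _ _))
  -- homotopy 1 : Φ to Pmap
  have hdeg1 : D.deg (PhiMap k) R 0 = D.deg (Pmap k) R 0 := by
    have h := D.homotopy_invariance (H1 k) R 0 hRo hRb (H1_cont k) ?_
    · rwa [H1_zero, H1_one] at h
    · intro t _ x hx
      exact H1_ne_zero k t x (hfront_ne x hx)
  -- homotopy 2 : Pmap to Pmap - y
  set f : (Fin k → ℂ) → (Fin k → ℂ) := fun w => Pmap k w - y with hfdef
  have hfcont : Continuous f := hPcont.sub continuous_const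
  have hdeg2 : D.deg (Pmap k) R 0 = D.deg f R 0 := by
    set H2 : ℝ → (Fin k → ℂ) → (Fin k → ℂ) := fun t w => Pmap k w - τ t • y with hH2
    have hcont : Continuous (fun p : ℝ × (Fin k → ℂ) => H2 p.1 p.2) :=
      (hPcont.comp continuous_snd).sub ((τ_cont.comp continuous_fst).smul continuous_const)
    have hfront : ∀ t ∈ Icc (0:ℝ) 1, ∀ x ∈ frontier R, H2 t x ≠ 0 := by
      intro t _ x hx hcon
      have h1 : Pmap k x = τ t • y := by
        rw [hH2] at hcon
        simpa [sub_eq_zero] using hcon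
      have h2 : ‖Pmap k x‖ ≤ ‖y‖ := by
        rw [h1, norm_smul, Real.norm_eq_abs, abs_of_nonneg (τ_mem t).1]
        have := (τ_mem t).2
        nlinarith [norm_nonneg y]
      have h3 : c ≤ ‖Pmap k x‖ := hmin hx
      linarith
    have h := D.homotopy_invariance H2 R 0 hRo hRb hcont hfront
    have e0 : H2 0 = Pmap k := by
      funext w; simp only [hH2, τ_zero, zero_smul, sub_zero]
    have e1 : H2 1 = f := by
      funext w; simp only [hH2, hfdef, τ_one, one_smul]
    rw [e0, e1] at h
    exact h
  -- characterization of zeros of f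
  have hzero : ∀ w, f w = 0 ↔ ∃ σ : Equiv.Perm (Fin k), w = ξ ∘ σ := by
    intro w
    constructor
    · intro hw
      have hcomp : ∀ j : Fin k, ∑ i, w i ^ ((j:ℕ)+1) = ∑ i, ξ i ^ ((j:ℕ)+1) := by
        intro j
        have := congrFun hw j
        rw [hfdef] at this
        simp only [Pi.sub_apply, Pi.zero_apply, sub_eq_zero] at this
        exact this
      have hp : ∀ n, 1 ≤ n → n ≤ k → ∑ i, w i ^ n = ∑ i, ξ i ^ n := by
        intro n hn1 hnk
        have hj : n - 1 < k := by omega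
        have := hcomp ⟨n-1, hj⟩
        have hn' : ((⟨n-1, hj⟩ : Fin k) : ℕ) + 1 = n := by simp; omega
        rwa [hn'] at this
      exact exists_perm w ξ hξinj (psum_multiset w ξ hp)
    · rintro ⟨σ, rfl⟩
      funext j
      rw [hfdef]
      simp only [Pi.sub_apply, Pi.zero_apply, sub_eq_zero, hydef]
      rw [Pmap, Pmap]
      exact Equiv.sum_comp σ (fun i => ξ i ^ ((j:ℕ)+1))
  -- separation of the k! roots
  have hsep : ∀ σ σ' : Equiv.Perm (Fin k), σ ≠ σ' → ε ≤ dist (ξ ∘ σ) (ξ ∘ σ') := by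
    intro σ σ' hne
    have : ∃ i, σ i ≠ σ' i := by
      by_contra hcon
      push_neg at hcon
      exact hne (Equiv.ext hcon)
    obtain ⟨i, hi⟩ := this
    have h1 : dist (ξ (σ i)) (ξ (σ' i)) ≤ dist (ξ ∘ σ) (ξ ∘ σ') :=
      dist_le_pi_dist (ξ ∘ σ) (ξ ∘ σ') i
    refine le_trans ?_ h1
    rw [dist_eq_norm, hξdef]
    set a : ℕ := ((σ i : Fin k) : ℕ)
    set b : ℕ := ((σ' i : Fin k) : ℕ)
    have hab : a ≠ b := fun h => hi (Fin.ext h)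
    have habs : (1:ℝ) ≤ |(a:ℝ) - (b:ℝ)| := by
      have h2 : (1:ℤ) ≤ |(a:ℤ) - (b:ℤ)| := Int.one_le_abs (by omega)
      exact_mod_cast h2
    have : ((ε * ((a:ℝ)+1) : ℝ) : ℂ) - ((ε * ((b:ℝ)+1) : ℝ) : ℂ)
        = ((ε * ((a:ℝ) - (b:ℝ)) : ℝ) : ℂ) := by
      push_cast
      ring
    rw [this, Complex.norm_real, Real.norm_eq_abs, abs_mul, abs_of_nonneg (le_of_lt hε)]
    have hm := mul_le_mul_of_nonneg_left habs (le_of_lt hε)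
    linarith
  -- local degrees
  have hloc : ∀ σ : Equiv.Perm (Fin k), ∃ r₀ > 0, ∀ r, 0 < r → r ≤ r₀ →
      D.deg f (Metric.ball (ξ ∘ σ) r) 0 = 1 := by
    intro σ
    have hroot : f (ξ ∘ σ) = 0 := (hzero (ξ ∘ σ)).mpr ⟨σ, rfl⟩
    have hinj : Function.Injective (ξ ∘ σ) := hξinj.comp σ.injective
    exact local_deg D f hfcont (ξ ∘ σ) hroot (Mmat (ξ ∘ σ)) (Mmat_det_ne_zero hinj)
      (hasFDeriv_Pmap y (ξ ∘ σ))
  choose r₀ hr₀pos hr₀deg using hloc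
  have hPermNe : (Finset.univ : Finset (Equiv.Perm (Fin k))).Nonempty :=
    ⟨1, Finset.mem_univ 1⟩
  obtain ⟨σm, _, hσm⟩ := Finset.exists_min_image Finset.univ r₀ hPermNe
  set r : ℝ := min (min (ε/3) (1/(4*(k:ℝ)+4))) (r₀ σm) with hrdef
  have hrpos : 0 < r := by
    apply lt_min (lt_min (by linarith) (by positivity)) (hr₀pos σm)
  have hrε3 : r ≤ ε/3 := le_trans (min_le_left _ _) (min_le_left _ _)
  have hrk : r ≤ 1/(4*(k:ℝ)+4) := le_trans (min_le_left _ _) (min_le_right _ _)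
  have hrinf : ∀ σ, r ≤ r₀ σ := fun σ =>
    le_trans (min_le_right _ _) (hσm σ (Finset.mem_univ σ))
  -- balls inside R
  have hballR : ∀ σ : Equiv.Perm (Fin k), Metric.ball (ξ ∘ σ) r ⊆ R := by
    intro σ x hx
    rw [Metric.mem_ball] at hx
    rw [hRdef, mem_setOf_eq]
    have h1 : ∑ i, ‖x i‖ ≤ ∑ i, ‖ξ (σ i)‖ + ∑ i, ‖x i - ξ (σ i)‖ := by
      rw [← Finset.sum_add_distrib]
      apply Finset.sum_le_sum
      intro i _
      calc ‖x i‖ = ‖ξ (σ i) + (x i - ξ (σ i))‖ := by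
            congr 1
            ring
        _ ≤ ‖ξ (σ i)‖ + ‖x i - ξ (σ i)‖ := norm_add_le _ _
    have h2 : ∑ i, ‖ξ (σ i)‖ = ε * B := by
      rw [← hξnorm]
      exact Equiv.sum_comp σ (fun i => ‖ξ i‖)
    have h3 : ∑ i, ‖x i - ξ (σ i)‖ ≤ (k:ℝ) * r := by
      calc ∑ i, ‖x i - ξ (σ i)‖ ≤ ∑ _i : Fin k, r := by
            apply Finset.sum_le_sum
            intro i _
            calc ‖x i - ξ (σ i)‖ = ‖(x - ξ ∘ σ) i‖ := by simp
              _ ≤ ‖x - ξ ∘ σ‖ := norm_le_pi_norm (x - ξ ∘ σ) i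
              _ ≤ r := by rw [← dist_eq_norm]; exact le_of_lt hx
        _ = (k:ℝ) * r := by simp [Finset.sum_const, Finset.card_univ, nsmul_eq_mul]
    have hεBeq : ε * B = min 1 c / 2 := by
      rw [hεdef]
      field_simp
    have hεB2 : ε * B ≤ 1/2 := by
      have : min 1 c ≤ 1 := min_le_left _ _
      rw [hεBeq]
      linarith
    have hkr : (k:ℝ) * r ≤ 1/4 := by
      have h4 : (k:ℝ) * r ≤ (k:ℝ) * (1/(4*(k:ℝ)+4)) :=
        mul_le_mul_of_nonneg_left hrk (Nat.cast_nonneg k)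
      have h5 : (k:ℝ) * (1/(4*(k:ℝ)+4)) ≤ 1/4 := by
        rw [mul_one_div, div_le_div_iff₀ (by positivity) (by norm_num)]
        push_cast
        nlinarith [Nat.cast_nonneg (α := ℝ) k]
      linarith
    linarith
  -- disjointness of closures
  have hdisj : ∀ σ ∈ (Finset.univ : Finset (Equiv.Perm (Fin k))),
      ∀ σ' ∈ (Finset.univ : Finset (Equiv.Perm (Fin k))), σ ≠ σ' →
      Disjoint (closure (Metric.ball (ξ ∘ σ) r)) (closure (Metric.ball (ξ ∘ σ') r)) := by
    intro σ _ σ' _ hne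
    apply Disjoint.mono Metric.closure_ball_subset_closedBall
      Metric.closure_ball_subset_closedBall
    apply Metric.closedBall_disjoint_closedBall
    have := hsep σ σ' hne
    linarith
  -- additivity
  have hsum := deg_finsum D f hfcont (Finset.univ : Finset (Equiv.Perm (Fin k))) R hRo hRb
    (fun σ => Metric.ball (ξ ∘ σ) r)
    (fun σ _ => Metric.isOpen_ball)
    (fun σ _ => hballR σ)
    hdisj
    (by
      intro x _ hnot hcon
      obtain ⟨σ, rfl⟩ := (hzero x).mp hcon
      exact hnot σ (Finset.mem_univ σ) (Metric.mem_ball_self hrpos))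
  have hsum2 : ∑ σ ∈ (Finset.univ : Finset (Equiv.Perm (Fin k))),
      D.deg f (Metric.ball (ξ ∘ σ) r) 0 = (Nat.factorial k : ℤ) := by
    have : ∀ σ ∈ (Finset.univ : Finset (Equiv.Perm (Fin k))),
        D.deg f (Metric.ball (ξ ∘ σ) r) 0 = 1 :=
      fun σ _ => hr₀deg σ r hrpos (hrinf σ)
    rw [Finset.sum_congr rfl this, Finset.sum_const, Finset.card_univ, Fintype.card_perm,
      Fintype.card_fin]
    simp
  rw [hdeg1, hdeg2, hsum, hsum2]

end BMaux

theorem stmt_3 (k : ℕ) :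
    (∀ D : DegreeTheory k,
      D.deg (PhiMap k) {w : Fin k → ℂ | ∑ i, ‖w i‖ < 1} 0 = (Nat.factorial k : ℤ)) ∧
    (∀ w : Fin k → ℂ, PhiMap k w = 0 ↔ w = 0) := by
  constructor
  · intro D
    rcases Nat.eq_zero_or_pos k with rfl | hk
    · have hidR : {w : Fin 0 → ℂ | ∑ i, ‖w i‖ < 1} = Set.univ := by
        ext w
        simp
      have hPhi : PhiMap 0 = id := by
        funext w j
        exact j.elim0
      have huniv_bdd : Bornology.IsBounded (Set.univ : Set (Fin 0 → ℂ)) := by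
        have h : (Set.univ : Set (Fin 0 → ℂ)) = {0} := by
          ext w
          simp only [mem_univ, mem_singleton_iff, true_iff]
          funext j
          exact j.elim0
        rw [h]
        exact Bornology.isBounded_singleton
      rw [hPhi, hidR, D.normalization Set.univ 0 isOpen_univ huniv_bdd (mem_univ 0)]
      simp [Nat.factorial]
    · exact BMaux.main_deg hk D
  · exact BMaux.Phi_zero_iff k
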